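/- If X ≤_{p0-tvar} Y for p0 ∈ (0,1) and φ is a strictly increasing convex function, then φ(X) ≤_{p0-tvar} φ(Y). -/
import Mathlib


open MeasureTheory Set Filter Topology

/-- Tail value at risk defined from a quantile function. -/
noncomputable def TVaRq (Finv : ℝ → ℝ) (p : ℝ) : ℝ := (1 - p)⁻¹ * ∫ u in p..1, Finv u

section Aux

variable {φ : ℝ → ℝ}

/-- secant slope monotonicity for convex functions, in `slope` form. -/
lemma sec_mono (hconv : ConvexOn ℝ Set.univ φ) {a x y : ℝ} (hxa : x ≠ a) (hya : y ≠ a)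
    (hxy : x ≤ y) : slope φ a x ≤ slope φ a y := by
  simpa [slope_def_field] using
    hconv.secant_mono (mem_univ a) (mem_univ x) (mem_univ y) hxa hya hxy

/-- a one-sided derivative surrogate: infimum of forward secant slopes. -/
noncomputable def rDer (φ : ℝ → ℝ) (c : ℝ) : ℝ := sInf (slope φ c '' Set.Ioi c)

lemma rDer_nonempty (c : ℝ) : (slope φ c '' Set.Ioi c).Nonempty :=
  ⟨slope φ c (c + 1), ⟨c + 1, by simp, rfl⟩⟩

lemma rDer_bddBelow (hconv : ConvexOn ℝ Set.univ φ) (c : ℝ) :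
    BddBelow (slope φ c '' Set.Ioi c) := by
  refine ⟨slope φ c (c - 1), ?_⟩
  rintro s ⟨d, hd, rfl⟩
  exact sec_mono hconv (by linarith) (ne_of_gt hd) (by linarith [mem_Ioi.1 hd])

lemma slope_pos' (hφ : StrictMono φ) {a b : ℝ} (hab : a ≠ b) : 0 < slope φ a b := by
  rcases hab.lt_or_gt with h | h
  · rw [slope_def_field]
    exact div_pos (sub_pos.2 (hφ h)) (sub_pos.2 h)
  · rw [slope_comm, slope_def_field]
    exact div_pos (sub_pos.2 (hφ h)) (sub_pos.2 h)

lemma rDer_nonneg (hφ : StrictMono φ) (c : ℝ) : 0 ≤ rDer φ c := by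
  refine le_csInf (rDer_nonempty c) ?_
  rintro s ⟨d, hd, rfl⟩
  exact (slope_pos' hφ (ne_of_lt hd)).le

lemma rDer_mono (hconv : ConvexOn ℝ Set.univ φ) {c₁ c₂ : ℝ} (h : c₁ ≤ c₂) :
    rDer φ c₁ ≤ rDer φ c₂ := by
  refine le_csInf (rDer_nonempty c₂) ?_
  rintro s ⟨d, hd, rfl⟩
  have hd' : c₁ < d := lt_of_le_of_lt h hd
  calc rDer φ c₁ ≤ slope φ c₁ d := csInf_le (rDer_bddBelow hconv c₁) ⟨d, hd', rfl⟩
    _ ≤ slope φ c₂ d := by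
        rw [slope_comm φ c₁ d, slope_comm φ c₂ d]
        exact sec_mono hconv (ne_of_lt hd') (ne_of_lt hd) h

lemma slope_le_slope (hconv : ConvexOn ℝ Set.univ φ) {a b c d : ℝ} (hab : a < b)
    (hbc : b ≤ c) (hcd : c < d) : slope φ a b ≤ slope φ c d := by
  have h1 : slope φ a b ≤ slope φ a d :=
    sec_mono hconv (ne_of_gt hab) (by linarith) (by linarith)
  have h2 : slope φ a d ≤ slope φ c d := by
    rw [slope_comm φ a d, slope_comm φ c d]
    exact sec_mono hconv (by linarith) (by linarith) (by linarith)
  linarith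

lemma slope_le_rDer (hconv : ConvexOn ℝ Set.univ φ) {a b c : ℝ} (hab : a ≠ b)
    (hac : a ≤ c) (hbc : b ≤ c) : slope φ a b ≤ rDer φ c := by
  refine le_csInf (rDer_nonempty c) ?_
  rintro s ⟨d, hd, rfl⟩
  rcases hab.lt_or_gt with h | h
  · exact slope_le_slope hconv h hbc hd
  · rw [slope_comm]
    exact slope_le_slope hconv h hac hd

lemma rDer_le_slope (hconv : ConvexOn ℝ Set.univ φ) {a b c : ℝ} (hab : a ≠ b)
    (hca : c ≤ a) (hcb : c ≤ b) : rDer φ c ≤ slope φ a b := by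
  -- wlog a < b
  suffices H : ∀ a b : ℝ, a < b → c ≤ a → rDer φ c ≤ slope φ a b by
    rcases hab.lt_or_gt with h | h
    · exact H a b h hca
    · rw [slope_comm]; exact H b a h hcb
  intro a b h hca
  have hcb' : c < b := lt_of_le_of_lt hca h
  calc rDer φ c ≤ slope φ c b := csInf_le (rDer_bddBelow hconv c) ⟨b, hcb', rfl⟩
    _ ≤ slope φ a b := by
        rw [slope_comm φ c b, slope_comm φ a b]
        exact sec_mono hconv (ne_of_lt hcb') (ne_of_lt h) hca

/-- the "chord slope" between `a` and `b`, right-derivative surrogate when `a = b`. -/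
noncomputable def pairV (φ : ℝ → ℝ) (a b : ℝ) : ℝ :=
  if a = b then rDer φ a else slope φ a b

lemma pairV_nonneg (hφ : StrictMono φ) (a b : ℝ) : 0 ≤ pairV φ a b := by
  unfold pairV
  split_ifs with h
  · exact rDer_nonneg hφ a
  · exact (slope_pos' hφ h).le

lemma pairV_mul (φ : ℝ → ℝ) (a b : ℝ) : pairV φ a b * (b - a) = φ b - φ a := by
  unfold pairV
  split_ifs with h
  · subst h; simp
  · rw [slope_def_field, div_mul_cancel₀]
    exact sub_ne_zero.2 (Ne.symm h)

lemma pairV_mono (hconv : ConvexOn ℝ Set.univ φ) {a₁ b₁ a₂ b₂ : ℝ}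
    (ha : a₁ ≤ a₂) (hb : b₁ ≤ b₂) : pairV φ a₁ b₁ ≤ pairV φ a₂ b₂ := by
  unfold pairV
  split_ifs with h1 h2 h2
  · exact rDer_mono hconv (h1 ▸ ha)
  · exact rDer_le_slope hconv h2 (h1 ▸ ha) (h1 ▸ hb)

  · exact slope_le_rDer hconv h1 (h2 ▸ ha) (h2 ▸ hb)
  · -- both nondegenerate chords
    by_cases hb2a1 : b₂ = a₁
    · -- then b₁ < b₂ = a₁ ≤ a₂
      have hb1 : b₁ < b₂ := lt_of_le_of_ne hb (fun e => h1 (hb2a1.symm.trans e.symm))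
      rw [← hb2a1, slope_comm φ a₂ b₂]
      exact sec_mono hconv (ne_of_lt hb1) h2 (by linarith)
    · have h1' : slope φ a₁ b₁ ≤ slope φ a₁ b₂ :=
        sec_mono hconv (Ne.symm h1) hb2a1 hb
      have h2' : slope φ a₁ b₂ ≤ slope φ a₂ b₂ := by
        rw [slope_comm φ a₁ b₂, slope_comm φ a₂ b₂]
        exact sec_mono hconv (fun e => hb2a1 e.symm) h2 ha
      linarith

end Aux

/-- Key lemma: if `h` is nonnegative and monotone on `(p,1)` and all the tail integrals of `g`
are nonnegative, then the integral of `h * g` is nonnegative. -/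
lemma weighted_tail_nonneg (g h : ℝ → ℝ) (p : ℝ)
    (hmono : MonotoneOn h (Set.Ioo p 1)) (hpos : ∀ u ∈ Set.Ioo p 1, 0 ≤ h u)
    (hg : IntegrableOn g (Set.Ioo p 1)) (hhg : IntegrableOn (fun u => h u * g u) (Set.Ioo p 1))
    (htail : ∀ q, p ≤ q → 0 ≤ ∫ u in Set.Ioo q 1, g u) :
    0 ≤ ∫ u in Set.Ioo p 1, h u * g u := by
  classical
  set S : ℝ → Set ℝ := fun c => {u | u ∈ Set.Ioo p 1 ∧ c ≤ h u} with hSdef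
  have measS : ∀ c, MeasurableSet (S c) := by
    intro c
    apply Set.OrdConnected.measurableSet
    constructor
    rintro x ⟨hx, hcx⟩ y ⟨hy, _⟩ z hz
    have hzI : z ∈ Set.Ioo p 1 := ⟨lt_of_lt_of_le hx.1 hz.1, lt_of_le_of_lt hz.2 hy.2⟩
    exact ⟨hzI, hcx.trans (hmono hx hzI hz.1)⟩
  have intS : ∀ c, 0 ≤ ∫ u in S c, g u := by
    intro c
    rcases Set.eq_empty_or_nonempty (S c) with hS | hS
    · simp [hS]
    · have hbdd : BddBelow (S c) := ⟨p, fun v hv => hv.1.1.le⟩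
      set q := sInf (S c) with hq
      have hpq : p ≤ q := le_csInf hS fun v hv => hv.1.1.le
      have hae : S c =ᵐ[volume] Set.Ioo q 1 := by
        rw [MeasureTheory.ae_eq_set]
        constructor
        · refine measure_mono_null (fun v hv => ?_) (?_ : volume ({q, 1} : Set ℝ) = 0)
          · rcases hv with ⟨hv1, hv2⟩
            have h1 : q ≤ v := csInf_le hbdd hv1
            have h2 : v ≤ 1 := hv1.1.2.le
            simp only [Set.mem_Ioo, not_and, not_lt] at hv2
            rcases eq_or_lt_of_le h1 with he | hlt
            · exact Or.inl he.symm
            · exact Or.inr (le_antisymm h2 (hv2 hlt))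
          · have : ({q, 1} : Set ℝ) = {q} ∪ {1} := rfl
            rw [this]
            exact measure_union_null (by simp) (by simp)
        · have hsub : Set.Ioo q 1 ⊆ S c := by
            intro u hu
            obtain ⟨v, hv, hvu⟩ := exists_lt_of_csInf_lt hS hu.1
            have huI : u ∈ Set.Ioo p 1 := ⟨hv.1.1.trans hvu, hu.2⟩
            exact ⟨huI, hv.2.trans (hmono hv.1 huI hvu.le)⟩
          rw [Set.diff_eq_empty.2 hsub]
          simp
      rw [setIntegral_congr_set hae]
      exact htail q hpq
  have h2n : ∀ n : ℕ, (0:ℝ) < 2 ^ n := fun n => by positivity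
  set F : ℕ → ℝ → ℝ := fun n u =>
    ((2:ℝ) ^ n)⁻¹ * ∑ k ∈ Finset.range (n * 2 ^ n),
      (S (((k:ℝ) + 1) / 2 ^ n)).indicator g u with hFdef
  have hintk : ∀ c : ℝ, Integrable ((S c).indicator g) (volume.restrict (Set.Ioo p 1)) :=
    fun c => hg.indicator (measS c)
  have hFint : ∀ n, Integrable (F n) (volume.restrict (Set.Ioo p 1)) := by
    intro n
    exact (integrable_finset_sum _ fun k _ => hintk _).const_mul _
  have hFpos : ∀ n, 0 ≤ ∫ u in Set.Ioo p 1, F n u := by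
    intro n
    simp only [hFdef]
    rw [MeasureTheory.integral_const_mul,
      integral_finset_sum _ fun k _ => hintk _]
    refine mul_nonneg (by positivity) (Finset.sum_nonneg fun k _ => ?_)
    rw [integral_indicator (measS _), Measure.restrict_restrict (measS _),
      Set.inter_eq_self_of_subset_left (fun v hv => hv.1)]
    exact intS _
  -- pointwise value of the approximants
  have hw : ∀ (n : ℕ) (u : ℝ), u ∈ Set.Ioo p 1 →
      F n u = (((2:ℝ) ^ n)⁻¹ * ((min (n * 2 ^ n) ⌊h u * 2 ^ n⌋₊ : ℕ) : ℝ)) * g u := by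
    intro n u hu
    have hhu : 0 ≤ h u * 2 ^ n := mul_nonneg (hpos u hu) (h2n n).le
    have hcond : ∀ k : ℕ, (u ∈ S (((k:ℝ) + 1) / 2 ^ n)) ↔ k < ⌊h u * 2 ^ n⌋₊ := by
      intro k
      simp only [hSdef, Set.mem_setOf_eq, hu, true_and]
      rw [div_le_iff₀ (h2n n), show ((k:ℝ) + 1) = ((k + 1 : ℕ) : ℝ) by push_cast; ring,
        ← Nat.le_floor_iff hhu]
      exact Nat.add_one_le_iff
    have hptw : ∀ k : ℕ, (S (((k:ℝ) + 1) / 2 ^ n)).indicator g u =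
        (if k < ⌊h u * 2 ^ n⌋₊ then (1:ℝ) else 0) * g u := by
      intro k
      by_cases hk : k < ⌊h u * 2 ^ n⌋₊
      · rw [Set.indicator_of_mem ((hcond k).2 hk), if_pos hk, one_mul]
      · rw [Set.indicator_of_notMem (fun hm => hk ((hcond k).1 hm)), if_neg hk, zero_mul]
    have hfilter : (Finset.range (n * 2 ^ n)).filter (fun k => k < ⌊h u * 2 ^ n⌋₊) =
        Finset.range (min (n * 2 ^ n) ⌊h u * 2 ^ n⌋₊) := by
      ext k
      simp [lt_min_iff]
    simp only [hFdef]
    rw [Finset.sum_congr rfl fun k _ => hptw k, ← Finset.sum_mul, Finset.sum_boole, hfilter,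
      Finset.card_range, mul_assoc]
  have hwle : ∀ (n : ℕ) (u : ℝ), u ∈ Set.Ioo p 1 →
      ((2:ℝ) ^ n)⁻¹ * ((min (n * 2 ^ n) ⌊h u * 2 ^ n⌋₊ : ℕ) : ℝ) ≤ h u := by
    intro n u hu
    rw [inv_mul_le_iff₀ (h2n n)]
    calc ((min (n * 2 ^ n) ⌊h u * 2 ^ n⌋₊ : ℕ) : ℝ) ≤ ((⌊h u * 2 ^ n⌋₊ : ℕ) : ℝ) := by
          exact_mod_cast min_le_right _ _
      _ ≤ h u * 2 ^ n := Nat.floor_le (mul_nonneg (hpos u hu) (h2n n).le)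
      _ = 2 ^ n * h u := mul_comm _ _
  have hbound : ∀ n : ℕ, ∀ᵐ u ∂(volume.restrict (Set.Ioo p 1)), ‖F n u‖ ≤ |h u * g u| := by
    intro n
    filter_upwards [ae_restrict_mem measurableSet_Ioo] with u hu
    calc ‖F n u‖ = (((2:ℝ) ^ n)⁻¹ * ((min (n * 2 ^ n) ⌊h u * 2 ^ n⌋₊ : ℕ) : ℝ)) * |g u| := by
          rw [hw n u hu, Real.norm_eq_abs, abs_mul, abs_of_nonneg (by positivity)]
      _ ≤ h u * |g u| := mul_le_mul_of_nonneg_right (hwle n u hu) (abs_nonneg _)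
      _ = |h u * g u| := by rw [abs_mul, abs_of_nonneg (hpos u hu)]
  have hlim : ∀ᵐ u ∂(volume.restrict (Set.Ioo p 1)),
      Tendsto (fun n => F n u) atTop (𝓝 (h u * g u)) := by
    filter_upwards [ae_restrict_mem measurableSet_Ioo] with u hu
    have hinv : Tendsto (fun n : ℕ => ((2:ℝ) ^ n)⁻¹) atTop (𝓝 0) := by
      simpa [inv_pow] using
        tendsto_pow_atTop_nhds_zero_of_lt_one (by norm_num : (0:ℝ) ≤ 2⁻¹)
          (by norm_num : (2:ℝ)⁻¹ < 1)
    have hwlim : Tendsto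
        (fun n : ℕ => ((2:ℝ) ^ n)⁻¹ * ((min (n * 2 ^ n) ⌊h u * 2 ^ n⌋₊ : ℕ) : ℝ))
        atTop (𝓝 (h u)) := by
      refine tendsto_of_tendsto_of_tendsto_of_le_of_le'
        (g := fun n : ℕ => h u - ((2:ℝ) ^ n)⁻¹) (h := fun _ : ℕ => h u)
        ?_ tendsto_const_nhds ?_ ?_
      · simpa using tendsto_const_nhds.sub hinv
      · filter_upwards [eventually_ge_atTop ⌈h u⌉₊] with n hn
        have hn' : h u ≤ (n : ℝ) := le_trans (Nat.le_ceil _) (Nat.cast_le.2 hn)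
        have hx : h u * 2 ^ n ≤ ((n * 2 ^ n : ℕ) : ℝ) := by
          push_cast
          exact mul_le_mul_of_nonneg_right hn' (h2n n).le
        have hfl : ⌊h u * 2 ^ n⌋₊ ≤ n * 2 ^ n := by
          calc ⌊h u * 2 ^ n⌋₊ ≤ ⌊((n * 2 ^ n : ℕ) : ℝ)⌋₊ := Nat.floor_mono hx
            _ = n * 2 ^ n := Nat.floor_natCast _
        rw [min_eq_right hfl]
        have hlt : h u * 2 ^ n - 1 ≤ (⌊h u * 2 ^ n⌋₊ : ℝ) := by
          have := Nat.lt_floor_add_one (h u * 2 ^ n)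
          linarith
        have heq : h u - ((2:ℝ) ^ n)⁻¹ = ((2:ℝ) ^ n)⁻¹ * (h u * 2 ^ n - 1) := by
          field_simp
        rw [heq]
        exact mul_le_mul_of_nonneg_left hlt (by positivity)
      · filter_upwards with n
        exact hwle n u hu
    exact (hwlim.mul_const (g u)).congr fun n => (hw n u hu).symm
  have hDCT := MeasureTheory.tendsto_integral_of_dominated_convergence
    (fun u => |h u * g u|) (fun n => (hFint n).aestronglyMeasurable) hhg.abs hbound hlim
  exact ge_of_tendsto hDCT (Filter.Eventually.of_forall hFpos)

theorem stmt8 (Finv Ginv φ : ℝ → ℝ) (p0 : ℝ) (hp0 : p0 ∈ Set.Ioo (0:ℝ) 1)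
    (hFmono : MonotoneOn Finv (Set.Ioo 0 1)) (hGmono : MonotoneOn Ginv (Set.Ioo 0 1))
    (hφ : StrictMono φ) (hconv : ConvexOn ℝ Set.univ φ)
    (hF : IntegrableOn Finv (Set.Ioo 0 1)) (hG : IntegrableOn Ginv (Set.Ioo 0 1))
    (hφF : IntegrableOn (fun u => φ (Finv u)) (Set.Ioo 0 1))
    (hφG : IntegrableOn (fun u => φ (Ginv u)) (Set.Ioo 0 1))
    (hord : ∀ p, p0 ≤ p → p < 1 → (∫ u in p..1, Finv u) ≤ ∫ u in p..1, Ginv u) :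
    ∀ p, p0 ≤ p → p < 1 → (∫ u in p..1, φ (Finv u)) ≤ ∫ u in p..1, φ (Ginv u) := by
  have cvt : ∀ (f : ℝ → ℝ) (q : ℝ), q ≤ 1 → (∫ u in q..1, f u) = ∫ u in Set.Ioo q 1, f u := by
    intro f q hq
    rw [intervalIntegral.integral_of_le hq, integral_Ioc_eq_integral_Ioo]
  intro p hp hp1
  have hp0' : 0 < p := lt_of_lt_of_le hp0.1 hp
  have hsub : Set.Ioo p 1 ⊆ Set.Ioo (0:ℝ) 1 := Set.Ioo_subset_Ioo hp0'.le le_rfl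
  rw [cvt _ p hp1.le, cvt _ p hp1.le, ← sub_nonneg,
    ← integral_sub (hφG.mono_set hsub) (hφF.mono_set hsub)]
  have key : (fun u => pairV φ (Finv u) (Ginv u) * (Ginv u - Finv u)) =
      fun u => φ (Ginv u) - φ (Finv u) := funext fun u => pairV_mul φ _ _
  rw [← key]
  refine weighted_tail_nonneg _ _ p ?_ ?_ ?_ ?_ ?_
  · intro u hu v hv huv
    exact pairV_mono hconv (hFmono (hsub hu) (hsub hv) huv) (hGmono (hsub hu) (hsub hv) huv)
  · intro u _
    exact pairV_nonneg hφ _ _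
  · exact (hG.mono_set hsub).sub (hF.mono_set hsub)
  · rw [key]
    exact (hφG.mono_set hsub).sub (hφF.mono_set hsub)
  · intro q hq
    rcases le_or_gt 1 q with h1q | h1q
    · rw [Set.Ioo_eq_empty (by exact fun h => absurd h1q (not_le.2 h))]
      simp
    · have hq0 : 0 < q := lt_of_lt_of_le hp0' hq
      have hsubq : Set.Ioo q 1 ⊆ Set.Ioo (0:ℝ) 1 := Set.Ioo_subset_Ioo hq0.le le_rfl
      rw [integral_sub (hG.mono_set hsubq) (hF.mono_set hsubq), ← cvt _ q h1q.le,
        ← cvt _ q h1q.le]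
      exact sub_nonneg.2 (hord q (le_trans hp hq) h1q)
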